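/- Let $X, Y$ be finite sets, $\mu, \tilde{\mu}$ probability measures on $X$, $\nu$ a probability measure on $Y$, and $\Gamma$ a coupling of $(\mu, \nu)$ (i.e., a probability measure on $X \times Y$ with marginals $\mu$ and $\nu$). Then there exists a coupling $\tilde{\Gamma}$ of $(\tilde{\mu}, \nu)$ such that the total variation distance between $\tilde{\Gamma}$ and $\Gamma$ equals the total variation distance between $\tilde{\mu}$ and $\mu$. -/
import Mathlib


theorem stmt9 {X Y : Type*} [Fintype X] [Fintype Y]
    (μ μ' : X → ℝ) (ν : Y → ℝ)
    (hμ : (∀ x, 0 ≤ μ x) ∧ ∑ x, μ x = 1)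
    (hμ' : (∀ x, 0 ≤ μ' x) ∧ ∑ x, μ' x = 1)
    (hν : (∀ y, 0 ≤ ν y) ∧ ∑ y, ν y = 1)
    (Γ : X → Y → ℝ)
    (hΓ : (∀ x y, 0 ≤ Γ x y) ∧ (∀ x, ∑ y, Γ x y = μ x) ∧ (∀ y, ∑ x, Γ x y = ν y)) :
    ∃ Γ' : X → Y → ℝ, (∀ x y, 0 ≤ Γ' x y) ∧ (∀ x, ∑ y, Γ' x y = μ' x) ∧
      (∀ y, ∑ x, Γ' x y = ν y) ∧
      (1 / 2) * ∑ x, ∑ y, |Γ' x y - Γ x y| = (1 / 2) * ∑ x, |μ' x - μ x| := by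
  obtain ⟨hμ0, hμ1⟩ := hμ
  obtain ⟨hμ'0, hμ'1⟩ := hμ'
  obtain ⟨hν0, hν1⟩ := hν
  obtain ⟨hΓ0, hΓr, hΓc⟩ := hΓ
  set m : X → ℝ := fun x => min (μ x) (μ' x) with hm
  have hm0 : ∀ x, 0 ≤ m x := fun x => le_min (hμ0 x) (hμ'0 x)
  have hmμ : ∀ x, m x ≤ μ x := fun x => min_le_left _ _
  have hmμ' : ∀ x, m x ≤ μ' x := fun x => min_le_right _ _
  set D : ℝ := ∑ x, (μ' x - m x) with hD
  have hDμ : D = ∑ x, (μ x - m x) := by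
    rw [hD, Finset.sum_sub_distrib, Finset.sum_sub_distrib, hμ1, hμ'1]
  have hD0 : 0 ≤ D := Finset.sum_nonneg fun x _ => sub_nonneg.2 (hmμ' x)
  have habs : ∀ x, |μ' x - μ x| = (μ' x - m x) + (μ x - m x) := by
    intro x
    rcases le_total (μ x) (μ' x) with h | h
    · rw [abs_of_nonneg (by linarith)]
      have : m x = μ x := min_eq_left h
      linarith
    · rw [abs_of_nonpos (by linarith)]
      have : m x = μ' x := min_eq_right h
      linarith
  have hΓzero : ∀ x y, μ x = 0 → Γ x y = 0 := by
    intro x y h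
    have hle : Γ x y ≤ ∑ y', Γ x y' :=
      Finset.single_le_sum (fun y' _ => hΓ0 x y') (Finset.mem_univ y)
    rw [hΓr x, h] at hle
    linarith [hΓ0 x y]
  rcases eq_or_lt_of_le hD0 with hDz | hDpos
  · -- degenerate case: μ' = μ
    have h1 : ∀ x, μ' x = m x := by
      intro x
      have := (Finset.sum_eq_zero_iff_of_nonneg
        (fun x _ => sub_nonneg.2 (hmμ' x))).1 hDz.symm x (Finset.mem_univ x)
      linarith
    have h2 : ∀ x, μ x = m x := by
      intro x
      have := (Finset.sum_eq_zero_iff_of_nonneg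
        (fun x _ => sub_nonneg.2 (hmμ x))).1 (hDμ ▸ hDz.symm) x (Finset.mem_univ x)
      linarith
    have heq : ∀ x, μ' x = μ x := fun x => (h1 x).trans (h2 x).symm
    refine ⟨Γ, hΓ0, fun x => (hΓr x).trans (heq x).symm, hΓc, ?_⟩
    simp [heq]
  · -- main case
    set r : X → ℝ := fun x => if μ x = 0 then 0 else m x / μ x with hr
    have hμpos : ∀ x, μ x ≠ 0 → 0 < μ x := fun x h => (hμ0 x).lt_of_ne (Ne.symm h)
    have hr1 : ∀ x, r x ≤ 1 := by
      intro x
      by_cases h : μ x = 0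
      · simp [hr, h]
      · simp only [hr, if_neg h]
        exact div_le_one_of_le₀ (hmμ x) (hμ0 x)
    have hr0 : ∀ x, 0 ≤ r x := by
      intro x
      by_cases h : μ x = 0
      · simp [hr, h]
      · simp only [hr, if_neg h]
        exact div_nonneg (hm0 x) (hμ0 x)
    have hμr : ∀ x, μ x * r x = m x := by
      intro x
      by_cases h : μ x = 0
      · have : m x = 0 := le_antisymm (h ▸ hmμ x) (hm0 x)
        simp [h, this]
      · simp only [hr, if_neg h]
        field_simp
    set c : Y → ℝ := fun y => ν y - ∑ x, Γ x y * r x with hc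
    have hc0 : ∀ y, 0 ≤ c y := by
      intro y
      have h1 : ∑ x, Γ x y * r x ≤ ∑ x, Γ x y :=
        Finset.sum_le_sum fun x _ => mul_le_of_le_one_right (hΓ0 x y) (hr1 x)
      rw [hΓc y] at h1
      simp only [hc]
      linarith
    have hrowr : ∀ x, ∑ y, Γ x y * r x = m x := by
      intro x
      rw [← Finset.sum_mul, hΓr x, hμr]
    have hsumc : ∑ y, c y = D := by
      simp only [hc]
      rw [Finset.sum_sub_distrib, hν1, Finset.sum_comm]
      simp only [hrowr]
      rw [hD, Finset.sum_sub_distrib, hμ'1]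
    refine ⟨fun x y => Γ x y * r x + (μ' x - m x) * c y / D, ?_, ?_, ?_, ?_⟩
    · intro x y
      have h1 := mul_nonneg (sub_nonneg.2 (hmμ' x)) (hc0 y)
      have h2 := mul_nonneg (hΓ0 x y) (hr0 x)
      have := div_nonneg h1 hD0
      linarith
    · intro x
      rw [Finset.sum_add_distrib, hrowr]
      have : ∑ y, (μ' x - m x) * c y / D = (μ' x - m x) := by
        rw [← Finset.sum_div, ← Finset.mul_sum, hsumc, mul_div_assoc,
          div_self hDpos.ne', mul_one]
      rw [this]; ring
    · intro y
      rw [Finset.sum_add_distrib]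
      have h1 : ∑ x, Γ x y * r x = ν y - c y := by simp [hc]
      have h2 : ∑ x, (μ' x - m x) * c y / D = c y := by
        rw [← Finset.sum_div, ← Finset.sum_mul, ← hD, mul_comm, mul_div_assoc,
          div_self hDpos.ne', mul_one]
      rw [h1, h2]; ring
    · congr 1
      apply Finset.sum_congr rfl
      intro x _
      rcases le_total (μ x) (μ' x) with h | h
      · -- m x = μ x, Γ x y * r x = Γ x y
        have hmx : m x = μ x := min_eq_left h
        have hΓr1 : ∀ y, Γ x y * r x = Γ x y := by
          intro y
          by_cases h0 : μ x = 0
          · rw [hΓzero x y h0]; ring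
          · have : r x = 1 := by
              simp only [hr, if_neg h0, hmx]
              field_simp
            rw [this, mul_one]
        have : ∀ y, |Γ x y * r x + (μ' x - m x) * c y / D - Γ x y|
            = (μ' x - m x) * c y / D := by
          intro y
          rw [hΓr1 y]
          have hnn : 0 ≤ (μ' x - m x) * c y / D :=
            div_nonneg (mul_nonneg (sub_nonneg.2 (hmμ' x)) (hc0 y)) hD0
          rw [show Γ x y + (μ' x - m x) * c y / D - Γ x y = (μ' x - m x) * c y / D by ring,
            abs_of_nonneg hnn]
        simp only [this]
        rw [← Finset.sum_div, ← Finset.mul_sum, hsumc, mul_div_assoc,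
          div_self hDpos.ne', mul_one, habs x, hmx]
        ring
      · -- m x = μ' x
        have hmx : m x = μ' x := min_eq_right h
        have : ∀ y, |Γ x y * r x + (μ' x - m x) * c y / D - Γ x y|
            = Γ x y * (1 - r x) := by
          intro y
          rw [hmx]
          have hnp : Γ x y * r x - Γ x y ≤ 0 := by
            nlinarith [hΓ0 x y, hr1 x]
          rw [show Γ x y * r x + (μ' x - μ' x) * c y / D - Γ x y
              = Γ x y * r x - Γ x y by ring, abs_of_nonpos hnp]
          ring
        simp only [this]
        rw [← Finset.sum_mul, hΓr x]
        have := hμr x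
        rw [habs x, hmx]
        nlinarith
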